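/- Let G be a finite simple graph with at least one edge, with Laplacian matrix L(G) and maximum vertex degree d_max. Then L(G) has a real eigenvalue μ̃ with μ̃ ≥ d_max; i.e. the largest eigenvalue of the Laplacian is at least the maximum degree. -/

import Mathlib

open Matrix Finset RealInnerProductSpace in
theorem stmt_12 {n : ℕ} (G : SimpleGraph (Fin n)) [DecidableRel G.Adj]
    (hE : G.edgeSet.Nonempty) :
    ∃ μ : ℝ, μ ∈ spectrum ℝ (G.lapMatrix ℝ) ∧ (G.maxDegree : ℝ) ≤ μ := by
  obtain ⟨e, he⟩ := hE
  have hn : Nonempty (Fin n) := by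
    induction e with
    | h a b => exact ⟨a⟩
  obtain ⟨v, hv⟩ := G.exists_maximal_degree_vertex
  have hL : (G.lapMatrix ℝ).IsHermitian := (SimpleGraph.posSemidef_lapMatrix ℝ G).1
  set lam := hL.eigenvalues with hlam
  set b := hL.eigenvectorBasis with hb
  obtain ⟨i₀, -, hi₀⟩ := Finset.exists_mem_eq_sup' (Finset.univ_nonempty (α := Fin n)) lam
  refine ⟨_, hL.eigenvalues_mem_spectrum_real i₀, ?_⟩
  set μ := lam i₀ with hμ
  have hle : ∀ i, lam i ≤ μ := fun i => hi₀ ▸ Finset.le_sup' lam (mem_univ i)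
  set x : EuclideanSpace ℝ (Fin n) := WithLp.toLp 2 (Pi.single v 1) with hxdef
  have hinner : ∀ y : EuclideanSpace ℝ (Fin n), (inner ℝ y x : ℝ) = y v := by
    intro y
    simp [PiLp.inner_apply, hxdef, Pi.single_apply, mul_comm]
  have hpar : ∑ i, (b i v)^2 = 1 := by
    have := b.sum_inner_mul_inner x x
    simp only [real_inner_comm _ x, hinner] at this
    simpa [sq, hxdef] using this
  have hdecomp : (∑ i, (b i v) • (b i : EuclideanSpace ℝ (Fin n))) = x := by
    have := b.sum_repr' x
    simpa only [hinner] using this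
  have hsum : ∀ (f : Fin n → Fin n → ℝ),
      (G.lapMatrix ℝ) *ᵥ (∑ i, f i) = ∑ i, (G.lapMatrix ℝ) *ᵥ f i := by
    intro f
    exact map_sum (Matrix.mulVecLin (G.lapMatrix ℝ)) f Finset.univ
  have h1 : (G.lapMatrix ℝ) *ᵥ (x : Fin n → ℝ) = ∑ i, (b i v) • (lam i • (b i : Fin n → ℝ)) := by
    rw [← hdecomp]
    rw [show (WithLp.ofLp (∑ i, (b i v) • (b i : EuclideanSpace ℝ (Fin n))) : Fin n → ℝ)
        = ∑ i, (b i v) • (b i : Fin n → ℝ) from by simp]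
    rw [hsum]
    refine Finset.sum_congr rfl fun i _ => ?_
    rw [Matrix.mulVec_smul]
    exact congrArg (fun y => b i v • y) (hL.mulVec_eigenvectorBasis i)
  have h2 : (x : Fin n → ℝ) ⬝ᵥ ((G.lapMatrix ℝ) *ᵥ (x : Fin n → ℝ)) = (G.degree v : ℝ) := by
    simp [hxdef, dotProduct, Pi.single_apply, mulVec, SimpleGraph.lapMatrix, SimpleGraph.degMatrix, Matrix.diagonal]
  have hquad : (G.degree v : ℝ) = ∑ i, lam i * (b i v)^2 := by
    rw [← h2, h1]
    have hds : ∀ (f : Fin n → Fin n → ℝ),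
        ((x : Fin n → ℝ) ⬝ᵥ ∑ i, f i) = ∑ i, (x : Fin n → ℝ) ⬝ᵥ f i := by
      intro f
      simp only [dotProduct, Finset.sum_apply, Finset.mul_sum]
      exact Finset.sum_comm
    rw [hds]
    refine Finset.sum_congr rfl fun i _ => ?_
    simp [dotProduct, hxdef, Pi.single_apply, ite_mul, sq]
    ring
  have : (G.degree v : ℝ) ≤ μ := by
    rw [hquad]
    calc ∑ i, lam i * (b i v)^2 ≤ ∑ i, μ * (b i v)^2 := by
          apply Finset.sum_le_sum
          intro i _
          exact mul_le_mul_of_nonneg_right (hle i) (sq_nonneg _)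
      _ = μ := by rw [← Finset.mul_sum, hpar, mul_one]
  rw [hv]
  exact this
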